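/- Let P be a probability measure on ℝ^k, K ⊂ ℝ^k compact, and for c ≥ 0 define s(c) = sup over (θ, u) ∈ K × S^{k-1} of P[|u'(X − θ)| ≤ c]. Then s(c) → s(0) as c decreases to 0, and the supremum s(0) is attained: there exist θ_0 ∈ K and a unit vector u_0 with s(0) = P[u_0'(X − θ_0) = 0]. -/

import Mathlib

open MeasureTheory Matrix Filter Topology

/-- Largest "eigenvalue" via the Rayleigh quotient (equals the largest eigenvalue
for symmetric matrices). -/
noncomputable def lamMax {k : ℕ} (A : Matrix (Fin k) (Fin k) ℝ) : ℝ :=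
  ⨆ u : {u : Fin k → ℝ // u ⬝ᵥ u = 1}, u.1 ⬝ᵥ A *ᵥ u.1

/-- Smallest "eigenvalue" via the Rayleigh quotient. -/
noncomputable def lamMin {k : ℕ} (A : Matrix (Fin k) (Fin k) ℝ) : ℝ :=
  ⨅ u : {u : Fin k → ℝ // u ⬝ᵥ u = 1}, u.1 ⬝ᵥ A *ᵥ u.1

/-- The scatter halfspace depth of a scatter matrix `Sg` w.r.t. the probability
measure `P`, with location `T`. -/
noncomputable def HD {k : ℕ} (P : Measure (Fin k → ℝ)) (T : Fin k → ℝ)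
    (Sg : Matrix (Fin k) (Fin k) ℝ) : ℝ :=
  ⨅ u : {u : Fin k → ℝ // u ⬝ᵥ u = 1},
    min (P {x | |u.1 ⬝ᵥ (x - T)| ≤ Real.sqrt (u.1 ⬝ᵥ Sg *ᵥ u.1)}).toReal
        (P {x | Real.sqrt (u.1 ⬝ᵥ Sg *ᵥ u.1) ≤ |u.1 ⬝ᵥ (x - T)|}).toReal

/-- Matrix square root via the continuous functional calculus. -/
noncomputable def msqrt {k : ℕ} (A : Matrix (Fin k) (Fin k) ℝ) : Matrix (Fin k) (Fin k) ℝ :=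
  cfc Real.sqrt A

/-- Matrix logarithm via the continuous functional calculus. -/
noncomputable def mlog {k : ℕ} (A : Matrix (Fin k) (Fin k) ℝ) : Matrix (Fin k) (Fin k) ℝ :=
  cfc Real.log A

/-- Matrix real power via the continuous functional calculus. -/
noncomputable def mpow {k : ℕ} (A : Matrix (Fin k) (Fin k) ℝ) (t : ℝ) :
    Matrix (Fin k) (Fin k) ℝ :=
  cfc (fun x : ℝ => x ^ t) A

/-- The geodesic path from `A` to `B` in the space of positive definite matrices. -/
noncomputable def geoPath {k : ℕ} (A B : Matrix (Fin k) (Fin k) ℝ) (t : ℝ) :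
    Matrix (Fin k) (Fin k) ℝ :=
  msqrt A * mpow ((msqrt A)⁻¹ * B * (msqrt A)⁻¹) t * msqrt A

/-- The harmonic path from `A` to `B`. -/
noncomputable def harmPath {k : ℕ} (A B : Matrix (Fin k) (Fin k) ℝ) (t : ℝ) :
    Matrix (Fin k) (Fin k) ℝ :=
  ((1 - t) • A⁻¹ + t • B⁻¹)⁻¹

/-- Frobenius norm of a matrix. -/
noncomputable def frob {k : ℕ} (A : Matrix (Fin k) (Fin k) ℝ) : ℝ :=
  Real.sqrt (∑ i, ∑ j, (A i j) ^ 2)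

/-- Geodesic distance on the space of positive definite matrices. -/
noncomputable def dg {k : ℕ} (A B : Matrix (Fin k) (Fin k) ℝ) : ℝ :=
  frob (mlog ((msqrt A)⁻¹ * B * (msqrt A)⁻¹))

/-- Sign vectors in `{-1,1}^k`. -/
def SignVec (k : ℕ) := {s : Fin k → ℝ // ∀ i, s i = 1 ∨ s i = -1}

/-- `s(c) = sup_{(θ,u) ∈ K × S^{k-1}} P[|u'(X − θ)| ≤ c]`. -/
noncomputable def sfun {k : ℕ} (P : Measure (Fin k → ℝ)) (K : Set (Fin k → ℝ))
    (c : ℝ) : ℝ :=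
  ⨆ θ : K, ⨆ u : {u : Fin k → ℝ // u ⬝ᵥ u = 1},
    (P {x | |u.1 ⬝ᵥ (x - θ.1)| ≤ c}).toReal

section Aux

variable {k : ℕ}

private lemma aux_sphere_nonempty [NeZero k] :
    Nonempty {u : Fin k → ℝ // u ⬝ᵥ u = 1} := by
  refine ⟨⟨Pi.single 0 1, ?_⟩⟩
  simp [dotProduct, Pi.single_apply]

private lemma aux_cont (u θ : Fin k → ℝ) :
    Continuous fun x : Fin k → ℝ => u ⬝ᵥ (x - θ) := by
  unfold dotProduct
  simp only [Pi.sub_apply]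
  exact continuous_finset_sum _ fun i _ =>
    continuous_const.mul ((continuous_apply i).sub continuous_const)

private lemma aux_slab_meas (u θ : Fin k → ℝ) (c : ℝ) :
    MeasurableSet {x : Fin k → ℝ | |u ⬝ᵥ (x - θ)| ≤ c} :=
  (isClosed_le (aux_cont u θ).abs continuous_const).measurableSet

private lemma aux_abs_dot_le (v x : Fin k → ℝ) : |v ⬝ᵥ x| ≤ (k : ℝ) * (‖v‖ * ‖x‖) := by
  calc |v ⬝ᵥ x| ≤ ∑ i, |v i * x i| := Finset.abs_sum_le_sum_abs _ _
    _ ≤ ∑ _i : Fin k, ‖v‖ * ‖x‖ := by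
        refine Finset.sum_le_sum fun i _ => ?_
        rw [abs_mul]
        exact mul_le_mul (by simpa using norm_le_pi_norm v i)
          (by simpa using norm_le_pi_norm x i) (abs_nonneg _) (norm_nonneg _)
    _ = (k : ℝ) * (‖v‖ * ‖x‖) := by
        simp [Finset.sum_const, nsmul_eq_mul]

private lemma aux_sphere_compact :
    IsCompact {u : Fin k → ℝ | u ⬝ᵥ u = 1} := by
  apply Metric.isCompact_of_isClosed_isBounded
  · have h : {u : Fin k → ℝ | u ⬝ᵥ u = 1} = (fun u : Fin k → ℝ => u ⬝ᵥ u) ⁻¹' {1} := rfl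
    rw [h]
    refine IsClosed.preimage ?_ isClosed_singleton
    unfold dotProduct
    exact continuous_finset_sum _ fun i _ => (continuous_apply i).mul (continuous_apply i)
  · rw [isBounded_iff_forall_norm_le]
    refine ⟨1, fun u hu => ?_⟩
    rw [pi_norm_le_iff_of_nonneg zero_le_one]
    intro i
    rw [Real.norm_eq_abs, abs_le_one_iff_mul_self_le_one]
    have h1 : u i * u i ≤ ∑ j, u j * u j :=
      Finset.single_le_sum (fun j _ => mul_self_nonneg (u j)) (Finset.mem_univ i)
    exact le_of_le_of_eq h1 hu

variable (P : Measure (Fin k → ℝ)) [IsProbabilityMeasure P]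

private lemma aux_toReal_le_one (s : Set (Fin k → ℝ)) : (P s).toReal ≤ 1 := by
  have h : P s ≤ 1 := prob_le_one
  calc (P s).toReal ≤ (1 : ENNReal).toReal := ENNReal.toReal_mono (by simp) h
    _ = 1 := by simp

private lemma aux_toReal_mono {s t : Set (Fin k → ℝ)} (h : s ⊆ t) :
    (P s).toReal ≤ (P t).toReal :=
  ENNReal.toReal_mono (measure_ne_top P t) (measure_mono h)

private lemma aux_toReal_union_le (s t : Set (Fin k → ℝ)) :
    (P (s ∪ t)).toReal ≤ (P s).toReal + (P t).toReal := by
  have h := measure_union_le (μ := P) s t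
  calc (P (s ∪ t)).toReal ≤ (P s + P t).toReal :=
      ENNReal.toReal_mono (ENNReal.add_ne_top.2 ⟨measure_ne_top P s, measure_ne_top P t⟩) h
    _ = (P s).toReal + (P t).toReal :=
      ENNReal.toReal_add (measure_ne_top P s) (measure_ne_top P t)

private lemma aux_bdd_u (θ : Fin k → ℝ) (c : ℝ) :
    BddAbove (Set.range fun u : {u : Fin k → ℝ // u ⬝ᵥ u = 1} =>
      (P {x | |u.1 ⬝ᵥ (x - θ)| ≤ c}).toReal) := by
  refine ⟨1, ?_⟩
  rintro _ ⟨u, rfl⟩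
  exact aux_toReal_le_one P _

private lemma aux_bdd_theta [NeZero k] (K : Set (Fin k → ℝ)) (c : ℝ) :
    BddAbove (Set.range fun θ : K => ⨆ u : {u : Fin k → ℝ // u ⬝ᵥ u = 1},
      (P {x | |u.1 ⬝ᵥ (x - θ.1)| ≤ c}).toReal) := by
  haveI := aux_sphere_nonempty (k := k)
  refine ⟨1, ?_⟩
  rintro _ ⟨θ, rfl⟩
  exact ciSup_le fun u => aux_toReal_le_one P _

private lemma aux_le_sfun [NeZero k] (K : Set (Fin k → ℝ)) {θ u : Fin k → ℝ}
    (hθ : θ ∈ K) (hu : u ⬝ᵥ u = 1) (c : ℝ) :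
    (P {x | |u ⬝ᵥ (x - θ)| ≤ c}).toReal ≤ sfun P K c := by
  have h1 : (P {x | |u ⬝ᵥ (x - θ)| ≤ c}).toReal
      ≤ ⨆ v : {v : Fin k → ℝ // v ⬝ᵥ v = 1},
        (P {x | |v.1 ⬝ᵥ (x - θ)| ≤ c}).toReal :=
    le_ciSup (aux_bdd_u P θ c) ⟨u, hu⟩
  exact h1.trans (le_ciSup (aux_bdd_theta P K c) ⟨θ, hθ⟩)

private lemma aux_sfun_mono [NeZero k] (K : Set (Fin k → ℝ)) (hKne : K.Nonempty) :
    Monotone (sfun P K) := by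
  haveI := hKne.to_subtype
  haveI := aux_sphere_nonempty (k := k)
  intro c c' hcc
  unfold sfun
  refine ciSup_mono (aux_bdd_theta P K c') fun θ => ?_
  refine ciSup_mono (aux_bdd_u P θ.1 c') fun u => ?_
  exact aux_toReal_mono P fun x hx => le_trans hx hcc

private lemma aux_exists [NeZero k] (K : Set (Fin k → ℝ)) (hKne : K.Nonempty)
    (c ε : ℝ) (hε : 0 < ε) :
    ∃ θ ∈ K, ∃ u : Fin k → ℝ, u ⬝ᵥ u = 1 ∧
      sfun P K c - ε < (P {x | |u ⬝ᵥ (x - θ)| ≤ c}).toReal := by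
  haveI := hKne.to_subtype
  haveI := aux_sphere_nonempty (k := k)
  have h : sfun P K c - ε < sfun P K c := sub_lt_self _ hε
  unfold sfun at h
  obtain ⟨θ, hθ⟩ := exists_lt_of_lt_ciSup h
  obtain ⟨u, hu⟩ := exists_lt_of_lt_ciSup hθ
  exact ⟨θ.1, θ.2, u.1, u.2, hu⟩

end Aux

/-- `s(c) → s(0)` as `c ↓ 0`, and the supremum `s(0)` is attained at
some `(θ₀, u₀) ∈ K × S^{k-1}`. -/
theorem sfun_tendsto_and_attained {k : ℕ} [NeZero k] (P : Measure (Fin k → ℝ))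
    [IsProbabilityMeasure P] (K : Set (Fin k → ℝ)) (hK : IsCompact K)
    (hKne : K.Nonempty) :
    Filter.Tendsto (sfun P K) (nhdsWithin 0 (Set.Ioi 0)) (nhds (sfun P K 0)) ∧
      ∃ θ0 ∈ K, ∃ u0 : Fin k → ℝ, u0 ⬝ᵥ u0 = 1 ∧
        sfun P K 0 = (P {x | u0 ⬝ᵥ (x - θ0) = 0}).toReal := by
  classical
  haveI := hKne.to_subtype
  haveI := aux_sphere_nonempty (k := k)
  have hmono := aux_sfun_mono P K hKne
  set L : ℝ := sInf (sfun P K '' Set.Ioi 0) with hL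
  have himne : (sfun P K '' Set.Ioi 0).Nonempty :=
    ⟨sfun P K 1, ⟨1, by norm_num, rfl⟩⟩
  have hbdd : BddBelow (sfun P K '' Set.Ioi 0) :=
    ⟨sfun P K 0, by rintro _ ⟨c, hc, rfl⟩; exact hmono (le_of_lt hc)⟩
  have hs0L : sfun P K 0 ≤ L :=
    le_csInf himne (by rintro _ ⟨c, hc, rfl⟩; exact hmono hc.le)
  have hLle : ∀ c : ℝ, 0 < c → L ≤ sfun P K c := fun c hc => csInf_le hbdd ⟨c, hc, rfl⟩
  -- a near-maximizing sequence
  have hseq : ∀ n : ℕ, ∃ θ ∈ K, ∃ u : Fin k → ℝ, u ⬝ᵥ u = 1 ∧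
      L - 1/((n:ℝ)+1) < (P {x | |u ⬝ᵥ (x - θ)| ≤ 1/((n:ℝ)+1)}).toReal := by
    intro n
    have hpos : (0:ℝ) < 1/((n:ℝ)+1) := by positivity
    obtain ⟨θ, hθ, u, hu, hlt⟩ := aux_exists P K hKne (1/((n:ℝ)+1)) (1/((n:ℝ)+1)) hpos
    refine ⟨θ, hθ, u, hu, lt_of_le_of_lt ?_ hlt⟩
    have h := hLle _ hpos
    linarith
  choose θs hθs us hus hlts using hseq
  -- compactness: extract a convergent subsequence
  have hS : IsCompact {u : Fin k → ℝ | u ⬝ᵥ u = 1} := aux_sphere_compact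
  have hKS : IsCompact (K ×ˢ {u : Fin k → ℝ | u ⬝ᵥ u = 1}) := hK.prod hS
  have hmem : ∀ n, (θs n, us n) ∈ K ×ˢ {u : Fin k → ℝ | u ⬝ᵥ u = 1} :=
    fun n => ⟨hθs n, hus n⟩
  obtain ⟨⟨θ0, u0⟩, hmem0, φ, hφ, hconv⟩ := hKS.tendsto_subseq hmem
  obtain ⟨hθ0K, hu0⟩ := hmem0
  have hθconv : Tendsto (fun n => θs (φ n)) atTop (𝓝 θ0) :=
    (continuous_fst.tendsto _).comp hconv
  have huconv : Tendsto (fun n => us (φ n)) atTop (𝓝 u0) :=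
    (continuous_snd.tendsto _).comp hconv
  -- key step: L ≤ P(slab(θ0, u0, c)) for every c > 0
  have hkey : ∀ c : ℝ, 0 < c → L ≤ (P {x | |u0 ⬝ᵥ (x - θ0)| ≤ c}).toReal := by
    intro c hc
    refine le_of_forall_pos_le_add fun ε hε => ?_
    -- tail mass outside a large ball is small
    have hball : Tendsto (fun n : ℕ => P ((Metric.closedBall (0 : Fin k → ℝ) n)ᶜ)) atTop
        (𝓝 (P (⋂ n : ℕ, (Metric.closedBall (0 : Fin k → ℝ) n)ᶜ))) := by
      refine tendsto_measure_iInter_atTop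
        (fun n => Metric.isClosed_closedBall.measurableSet.compl.nullMeasurableSet)
        (fun a b hab => Set.compl_subset_compl.2
          (Metric.closedBall_subset_closedBall (by exact_mod_cast hab)))
        ⟨0, measure_ne_top P _⟩
    have hiInter : (⋂ n : ℕ, (Metric.closedBall (0 : Fin k → ℝ) n)ᶜ) = ∅ := by
      ext x
      simp only [Set.mem_iInter, Set.mem_compl_iff, Metric.mem_closedBall, not_le,
        Set.mem_empty_iff_false, iff_false, not_forall, not_lt]
      obtain ⟨n, hn⟩ := exists_nat_ge (dist x 0)
      exact ⟨n, hn⟩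
    rw [hiInter, measure_empty] at hball
    have hεR : ∀ᶠ n : ℕ in atTop,
        P ((Metric.closedBall (0 : Fin k → ℝ) n)ᶜ) < ENNReal.ofReal (ε/2) :=
      hball.eventually (eventually_lt_nhds (by
        rw [show (0 : ENNReal) = ENNReal.ofReal 0 by simp]
        exact (ENNReal.ofReal_lt_ofReal_iff (by linarith)).2 (by linarith)))
    obtain ⟨R, hR⟩ := hεR.exists
    have hRtail : (P ((Metric.closedBall (0 : Fin k → ℝ) R)ᶜ)).toReal ≤ ε/2 :=
      ENNReal.toReal_le_of_le_ofReal (by linarith) hR.le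
    -- eventual smallness of the error terms
    have hone : Tendsto (fun n : ℕ => 1/((n:ℝ)+1)) atTop (𝓝 0) :=
      tendsto_one_div_add_atTop_nhds_zero_nat
    have honeφ : Tendsto (fun n : ℕ => 1/((φ n : ℝ)+1)) atTop (𝓝 0) :=
      hone.comp hφ.tendsto_atTop
    have h1 : ∀ᶠ n in atTop, 1/((φ n : ℝ)+1) < c/3 :=
      honeφ.eventually (eventually_lt_nhds (by linarith))
    have h4 : ∀ᶠ n in atTop, 1/((φ n : ℝ)+1) < ε/2 :=
      honeφ.eventually (eventually_lt_nhds (by linarith))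
    have hnorm : Tendsto (fun n => (k:ℝ) * (‖us (φ n) - u0‖ * (R:ℝ))) atTop (𝓝 0) := by
      have h0 := (huconv.sub (tendsto_const_nhds (x := u0))).norm
      have h0' : Tendsto (fun n => ‖us (φ n) - u0‖) atTop (𝓝 0) := by simpa using h0
      simpa using tendsto_const_nhds.mul (h0'.mul tendsto_const_nhds)
    have h2 : ∀ᶠ n in atTop, (k:ℝ) * (‖us (φ n) - u0‖ * (R:ℝ)) < c/3 :=
      hnorm.eventually (eventually_lt_nhds (by linarith))
    have hdot : Tendsto (fun n => us (φ n) ⬝ᵥ θs (φ n)) atTop (𝓝 (u0 ⬝ᵥ θ0)) := by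
      unfold dotProduct
      exact tendsto_finset_sum _ fun i _ =>
        (tendsto_pi_nhds.1 huconv i).mul (tendsto_pi_nhds.1 hθconv i)
    have hdot' : Tendsto (fun n => |us (φ n) ⬝ᵥ θs (φ n) - u0 ⬝ᵥ θ0|) atTop (𝓝 0) := by
      have h0 := (hdot.sub (tendsto_const_nhds (x := u0 ⬝ᵥ θ0))).abs
      simpa using h0
    have h3 : ∀ᶠ n in atTop, |us (φ n) ⬝ᵥ θs (φ n) - u0 ⬝ᵥ θ0| < c/3 :=
      hdot'.eventually (eventually_lt_nhds (by linarith))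
    obtain ⟨n, ⟨⟨hn1, hn2⟩, hn3⟩, hn4⟩ := (((h1.and h2).and h3).and h4).exists
    -- slab inclusion within the ball
    have hsub : {x : Fin k → ℝ | |us (φ n) ⬝ᵥ (x - θs (φ n))| ≤ 1/((φ n : ℝ)+1)}
        ∩ Metric.closedBall 0 R ⊆ {x | |u0 ⬝ᵥ (x - θ0)| ≤ c} := by
      rintro x ⟨hx1, hx2⟩
      have hxnorm : ‖x‖ ≤ (R:ℝ) := by
        simpa [dist_zero_right] using Metric.mem_closedBall.1 hx2
      have hdiff : u0 ⬝ᵥ (x - θ0) = us (φ n) ⬝ᵥ (x - θs (φ n))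
          + ((u0 - us (φ n)) ⬝ᵥ x + (us (φ n) ⬝ᵥ θs (φ n) - u0 ⬝ᵥ θ0)) := by
        simp only [dotProduct_sub, sub_dotProduct]
        ring
      have habs : |u0 ⬝ᵥ (x - θ0)| ≤ |us (φ n) ⬝ᵥ (x - θs (φ n))|
          + (|(u0 - us (φ n)) ⬝ᵥ x| + |us (φ n) ⬝ᵥ θs (φ n) - u0 ⬝ᵥ θ0|) := by
        rw [hdiff]
        exact (abs_add_le _ _).trans (by gcongr; exact abs_add_le _ _)
      have hb1 : |(u0 - us (φ n)) ⬝ᵥ x| ≤ (k:ℝ) * (‖u0 - us (φ n)‖ * ‖x‖) :=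
        aux_abs_dot_le _ _
      have hb2 : (k:ℝ) * (‖u0 - us (φ n)‖ * ‖x‖) ≤ (k:ℝ) * (‖us (φ n) - u0‖ * (R:ℝ)) := by
        rw [norm_sub_rev]
        gcongr
      have hx1' : |us (φ n) ⬝ᵥ (x - θs (φ n))| ≤ 1/((φ n : ℝ)+1) := hx1
      show |u0 ⬝ᵥ (x - θ0)| ≤ c
      linarith
    -- measure comparison
    have hmeasn : L - 1/((φ n : ℝ)+1)
        < (P {x | |us (φ n) ⬝ᵥ (x - θs (φ n))| ≤ 1/((φ n : ℝ)+1)}).toReal := hlts (φ n)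
    have hcover : {x : Fin k → ℝ | |us (φ n) ⬝ᵥ (x - θs (φ n))| ≤ 1/((φ n : ℝ)+1)}
        ⊆ {x | |u0 ⬝ᵥ (x - θ0)| ≤ c} ∪ (Metric.closedBall 0 R)ᶜ := by
      intro x hx
      by_cases hxR : x ∈ Metric.closedBall (0 : Fin k → ℝ) R
      · exact Or.inl (hsub ⟨hx, hxR⟩)
      · exact Or.inr hxR
    have hsplit : (P {x | |us (φ n) ⬝ᵥ (x - θs (φ n))| ≤ 1/((φ n : ℝ)+1)}).toReal
        ≤ (P {x | |u0 ⬝ᵥ (x - θ0)| ≤ c}).toReal + ε/2 := by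
      calc (P {x | |us (φ n) ⬝ᵥ (x - θs (φ n))| ≤ 1/((φ n : ℝ)+1)}).toReal
          ≤ (P ({x | |u0 ⬝ᵥ (x - θ0)| ≤ c} ∪ (Metric.closedBall 0 R)ᶜ)).toReal :=
            aux_toReal_mono P hcover
        _ ≤ (P {x | |u0 ⬝ᵥ (x - θ0)| ≤ c}).toReal
            + (P ((Metric.closedBall (0 : Fin k → ℝ) R)ᶜ)).toReal :=
            aux_toReal_union_le P _ _
        _ ≤ (P {x | |u0 ⬝ᵥ (x - θ0)| ≤ c}).toReal + ε/2 := by linarith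
    linarith
  -- the hyperplane as a decreasing intersection of slabs
  have hplane : {x : Fin k → ℝ | u0 ⬝ᵥ (x - θ0) = 0}
      = ⋂ n : ℕ, {x | |u0 ⬝ᵥ (x - θ0)| ≤ 1/((n:ℝ)+1)} := by
    ext x
    simp only [Set.mem_iInter, Set.mem_setOf_eq]
    constructor
    · intro h n
      rw [h, abs_zero]
      positivity
    · intro h
      have h0 : |u0 ⬝ᵥ (x - θ0)| ≤ 0 :=
        ge_of_tendsto' tendsto_one_div_add_atTop_nhds_zero_nat h
      exact abs_nonpos_iff.1 h0
  have hcontab : Tendsto (fun n : ℕ => (P {x | |u0 ⬝ᵥ (x - θ0)| ≤ 1/((n:ℝ)+1)}).toReal)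
      atTop (𝓝 ((P {x | u0 ⬝ᵥ (x - θ0) = 0}).toReal)) := by
    have h := tendsto_measure_iInter_atTop (μ := P)
      (s := fun n : ℕ => {x | |u0 ⬝ᵥ (x - θ0)| ≤ 1/((n:ℝ)+1)})
      (fun n => (aux_slab_meas u0 θ0 _).nullMeasurableSet)
      (fun a b hab x hx => le_trans hx (by
        show 1/((b:ℝ)+1) ≤ 1/((a:ℝ)+1)
        apply one_div_le_one_div_of_le
        · positivity
        · exact_mod_cast add_le_add_left (Nat.cast_le.2 hab) (1:ℝ)))
      ⟨0, measure_ne_top P _⟩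
    rw [← hplane] at h
    exact (ENNReal.tendsto_toReal (measure_ne_top P _)).comp h
  have hLplane : L ≤ (P {x | u0 ⬝ᵥ (x - θ0) = 0}).toReal :=
    ge_of_tendsto' hcontab fun n => hkey _ (by positivity)
  have hplane0 : {x : Fin k → ℝ | u0 ⬝ᵥ (x - θ0) = 0}
      = {x | |u0 ⬝ᵥ (x - θ0)| ≤ 0} := by
    ext x
    simp [abs_nonpos_iff]
  have hps0 : (P {x | u0 ⬝ᵥ (x - θ0) = 0}).toReal ≤ sfun P K 0 := by
    rw [hplane0]
    exact aux_le_sfun P K hθ0K hu0 0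
  have hLeq : L = sfun P K 0 := le_antisymm (hLplane.trans hps0) hs0L
  constructor
  · have h := hmono.tendsto_nhdsGT 0
    rw [← hL, hLeq] at h
    exact h
  · exact ⟨θ0, hθ0K, u0, hu0,
      le_antisymm (hs0L.trans hLplane) hps0⟩
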